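/- The sum over all partitions λ of n of the square of the number of standard Young tableaux of shape λ equals n!. -/
import Mathlib


/-- A standard Young tableau of shape μ: a bijective filling of the cells of μ
by 0,...,|μ|-1 that is strictly increasing along rows and columns
(equivalently, along the componentwise order). -/
def SYT (μ : YoungDiagram) : Type :=
  {f : μ.cells → Fin μ.card // Function.Bijective f ∧
    ∀ c₁ c₂ : μ.cells, c₁.1.1 ≤ c₂.1.1 → c₁.1.2 ≤ c₂.1.2 → c₁ ≠ c₂ →
      f c₁ < f c₂}

namespace SYTAux

open Finset YoungDiagram

open scoped Classical

/-! ### Finiteness of diagrams of a given size -/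

lemma fst_lt_card {μ : YoungDiagram} {c : ℕ × ℕ} (hc : c ∈ μ) : c.1 < μ.card := by
  have h1 : c.1 < μ.colLen c.2 := by
    rw [← YoungDiagram.mem_iff_lt_colLen]; exact hc
  have h2 : μ.colLen c.2 ≤ μ.card := by
    rw [YoungDiagram.colLen_eq_card]
    exact Finset.card_le_card fun x hx => (YoungDiagram.mem_col_iff.mp hx).1
  omega

lemma snd_lt_card {μ : YoungDiagram} {c : ℕ × ℕ} (hc : c ∈ μ) : c.2 < μ.card := by
  have h1 : c.2 < μ.rowLen c.1 := by
    rw [← YoungDiagram.mem_iff_lt_rowLen]; exact hc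
  have h2 : μ.rowLen c.1 ≤ μ.card := by
    rw [YoungDiagram.rowLen_eq_card]
    exact Finset.card_le_card fun x hx => (YoungDiagram.mem_row_iff.mp hx).1
  omega

lemma finite_Y (n : ℕ) : {μ : YoungDiagram | μ.card = n}.Finite := by
  have : {μ : YoungDiagram | μ.card = n} ⊆
      YoungDiagram.cells ⁻¹' ((Finset.range n ×ˢ Finset.range n).powerset : Finset (Finset (ℕ × ℕ))) := by
    intro μ hμ
    simp only [Set.mem_preimage, Finset.coe_powerset, Set.mem_setOf_eq, Finset.mem_coe,
      Finset.mem_powerset]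
    intro c hc
    have hc' : c ∈ μ := hc
    rw [Finset.mem_coe, Finset.mem_product, Finset.mem_range, Finset.mem_range]
    exact ⟨hμ ▸ fst_lt_card hc', hμ ▸ snd_lt_card hc'⟩
  exact Set.Finite.subset (Set.Finite.preimage (fun a _ b _ h => by
    rwa [YoungDiagram.ext_iff]) (Set.finite_coe_iff.mp (by infer_instance))) this

/-- The finset of Young diagrams with `n` cells. -/
noncomputable def Y (n : ℕ) : Finset YoungDiagram := (finite_Y n).toFinset

@[simp] lemma mem_Y {n : ℕ} {μ : YoungDiagram} : μ ∈ Y n ↔ μ.card = n :=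
  Set.Finite.mem_toFinset _

lemma Y_zero : Y 0 = {⊥} := by
  ext μ
  simp only [mem_Y, Finset.mem_singleton]
  constructor
  · intro h
    have : μ.cells = ∅ := Finset.card_eq_zero.mp h
    ext c
    simp [← YoungDiagram.mem_cells, this]
  · rintro rfl; rfl

/-- The covers of μ from below (diagrams with one fewer cell). -/
noncomputable def down (μ : YoungDiagram) : Finset YoungDiagram :=
  (Y (μ.card - 1)).filter (fun ν => ν ≤ μ ∧ ν ≠ μ)

/-- The covers of μ from above (diagrams with one more cell). -/
noncomputable def up (μ : YoungDiagram) : Finset YoungDiagram :=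
  (Y (μ.card + 1)).filter (fun l => μ ≤ l)

/-- Number of standard chains `⊥ = μ₀ ⋖ ⋯ ⋖ μₙ = μ`. -/
noncomputable def C : ℕ → YoungDiagram → ℕ
  | 0, μ => if μ = ⊥ then 1 else 0
  | n + 1, μ => if μ.card = n + 1 then ∑ ν ∈ (Y n).filter (fun ν => ν ≤ μ), C n ν else 0

lemma C_succ {n : ℕ} {μ : YoungDiagram} (h : μ.card = n + 1) :
    C (n + 1) μ = ∑ ν ∈ (Y n).filter (fun ν => ν ≤ μ), C n ν := by
  rw [C, if_pos h]

lemma down_eq {n : ℕ} {μ : YoungDiagram} (h : μ.card = n + 1) :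
    down μ = (Y n).filter (fun ν => ν ≤ μ) := by
  unfold down
  rw [h]
  apply Finset.filter_congr
  intro ν hν
  simp only [mem_Y] at hν
  simp only [and_iff_left_iff_imp]
  intro _ h2
  rw [h2] at hν; omega

lemma C_succ' {n : ℕ} {μ : YoungDiagram} (h : μ.card = n + 1) :
    C (n + 1) μ = ∑ ν ∈ down μ, C n ν := by
  rw [C_succ h, down_eq h]

variable {μ : YoungDiagram}


/-- Rows at which a cell can be added. -/
noncomputable def addables (μ : YoungDiagram) : Finset ℕ :=
  (Finset.range (μ.colLen 0 + 1)).filter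
    (fun i => i = 0 ∨ μ.rowLen i < μ.rowLen (i - 1))

/-- Rows at which a cell can be removed. -/
noncomputable def removables (μ : YoungDiagram) : Finset ℕ :=
  (Finset.range (μ.colLen 0)).filter (fun i => μ.rowLen (i + 1) < μ.rowLen i)

lemma addables_eq : addables μ = insert 0 ((removables μ).image (· + 1)) := by
  ext x
  simp only [addables, removables, Finset.mem_insert, Finset.mem_image, Finset.mem_filter,
    Finset.mem_range]
  constructor
  · rintro ⟨hx, h0 | hlt⟩
    · exact Or.inl h0
    · rcases Nat.eq_zero_or_pos x with rfl | hpos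
      · exact Or.inl rfl
      · refine Or.inr ⟨x - 1, ⟨⟨?_, ?_⟩, by omega⟩⟩
        · -- x - 1 < colLen 0, i.e. rowLen (x-1) > 0
          have : 0 < μ.rowLen (x - 1) := by omega
          have : (x - 1, 0) ∈ μ := by rw [YoungDiagram.mem_iff_lt_rowLen]; omega
          rw [YoungDiagram.mem_iff_lt_colLen] at this; exact this
        · have : x - 1 + 1 = x := by omega
          rw [this]; exact hlt
  · rintro (rfl | ⟨i, ⟨⟨hi, hlt⟩, rfl⟩⟩)
    · exact ⟨by omega, Or.inl rfl⟩
    · refine ⟨by omega, Or.inr ?_⟩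
      simpa using hlt

lemma card_addables : (addables μ).card = (removables μ).card + 1 := by
  rw [addables_eq, Finset.card_insert_of_notMem (by simp),
    Finset.card_image_of_injective _ (fun a b h => by omega)]

lemma rowLen_pos_of_mem_removables {i : ℕ} (hi : i ∈ removables μ) : 0 < μ.rowLen i := by
  simp only [removables, Finset.mem_filter, Finset.mem_range] at hi
  have := hi.1
  rw [← YoungDiagram.mem_iff_lt_colLen, YoungDiagram.mem_iff_lt_rowLen] at this
  omega

lemma addable_notMem {i : ℕ} : (i, μ.rowLen i) ∉ μ := by
  rw [YoungDiagram.mem_iff_lt_rowLen]; omega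

/-- Adding a cell at the end of row `i`. -/
noncomputable def addCell (μ : YoungDiagram) (i : ℕ) (hi : i ∈ addables μ) : YoungDiagram where
  cells := insert (i, μ.rowLen i) μ.cells
  isLowerSet := by
    simp only [addables, Finset.mem_filter, Finset.mem_range] at hi
    intro b a hab hb
    simp only [Finset.coe_insert, Set.mem_insert_iff, Finset.mem_coe,
      YoungDiagram.mem_cells] at hb ⊢
    obtain ⟨h1, h2⟩ := Prod.le_def.mp hab
    rcases hb with hb | hb
    · have hb1 : b.1 = i := by rw [hb]
      have hb2 : b.2 = μ.rowLen i := by rw [hb]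
      rw [hb1] at h1
      rw [hb2] at h2
      by_cases ha : a = (i, μ.rowLen i)
      · exact Or.inl ha
      · right
        rw [← Prod.mk.eta (p := a), YoungDiagram.mem_iff_lt_rowLen]
        rcases Nat.lt_or_ge a.2 (μ.rowLen i) with h | h
        · exact lt_of_lt_of_le h (μ.rowLen_anti _ _ h1)
        · have ha2 : a.2 = μ.rowLen i := by omega
          have ha1 : a.1 < i := by
            rcases Nat.lt_or_ge a.1 i with h' | h'
            · exact h'
            · exfalso
              exact ha (Prod.ext_iff.mpr ⟨by omega, ha2⟩)
          rcases hi.2 with h' | h'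
          · omega
          · have : μ.rowLen (i - 1) ≤ μ.rowLen a.1 := μ.rowLen_anti _ _ (by omega)
            omega
    · exact Or.inr (μ.isLowerSet hab hb)

lemma mem_addCell {i : ℕ} (hi : i ∈ addables μ) {c : ℕ × ℕ} :
    c ∈ addCell μ i hi ↔ c = (i, μ.rowLen i) ∨ c ∈ μ := by
  simp [addCell, ← YoungDiagram.mem_cells]

lemma addCell_card {i : ℕ} (hi : i ∈ addables μ) : (addCell μ i hi).card = μ.card + 1 := by
  simp only [YoungDiagram.card, addCell]
  rw [Finset.card_insert_of_notMem addable_notMem]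

lemma mem_of_le {ν ρ : YoungDiagram} (h : ν ≤ ρ) {c : ℕ × ℕ} (hc : c ∈ ν) : c ∈ ρ :=
  YoungDiagram.cells_subset_iff.mpr h hc

lemma le_addCell {i : ℕ} (hi : i ∈ addables μ) : μ ≤ addCell μ i hi := by
  rw [← YoungDiagram.cells_subset_iff]
  exact Finset.subset_insert _ _

/-- Removing the last cell of row `i`. -/
noncomputable def delCell (μ : YoungDiagram) (i : ℕ) (hi : i ∈ removables μ) : YoungDiagram where
  cells := μ.cells.erase (i, μ.rowLen i - 1)
  isLowerSet := by
    simp only [removables, Finset.mem_filter, Finset.mem_range] at hi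
    have hpos : 0 < μ.rowLen i := by
      have := hi.1
      rw [← YoungDiagram.mem_iff_lt_colLen, YoungDiagram.mem_iff_lt_rowLen] at this
      omega
    intro b a hab hb
    simp only [Finset.coe_erase, Set.mem_diff, Finset.mem_coe, YoungDiagram.mem_cells,
      Set.mem_singleton_iff] at hb ⊢
    obtain ⟨hbμ, hbne⟩ := hb
    refine ⟨μ.isLowerSet hab hbμ, ?_⟩
    rintro rfl
    obtain ⟨h1, h2⟩ := Prod.le_def.mp hab
    simp only at h1 h2
    have hb2 : b.2 < μ.rowLen b.1 := by
      rw [← YoungDiagram.mem_iff_lt_rowLen, Prod.mk.eta]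
      exact hbμ
    have hmono : μ.rowLen b.1 ≤ μ.rowLen i := μ.rowLen_anti _ _ h1
    have hb2' : b.2 = μ.rowLen i - 1 := by omega
    have hb1 : b.1 = i := by
      rcases Nat.lt_or_ge i b.1 with h | h
      · have : μ.rowLen b.1 ≤ μ.rowLen (i + 1) := μ.rowLen_anti _ _ (by omega)
        omega
      · omega
    exact hbne (Prod.ext_iff.mpr ⟨hb1, hb2'⟩)

lemma mem_delCell {i : ℕ} (hi : i ∈ removables μ) {c : ℕ × ℕ} :
    c ∈ delCell μ i hi ↔ c ≠ (i, μ.rowLen i - 1) ∧ c ∈ μ := by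
  simp [delCell, ← YoungDiagram.mem_cells, Finset.mem_erase]

lemma corner_mem {i : ℕ} (hi : i ∈ removables μ) : (i, μ.rowLen i - 1) ∈ μ := by
  have := rowLen_pos_of_mem_removables hi
  rw [YoungDiagram.mem_iff_lt_rowLen]; omega

lemma delCell_card {i : ℕ} (hi : i ∈ removables μ) : (delCell μ i hi).card = μ.card - 1 := by
  simp only [YoungDiagram.card, delCell]
  rw [Finset.card_erase_of_mem (corner_mem hi)]

lemma delCell_le {i : ℕ} (hi : i ∈ removables μ) : delCell μ i hi ≤ μ := by
  rw [← YoungDiagram.cells_subset_iff]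
  exact Finset.erase_subset _ _

lemma card_up : (up μ).card = (addables μ).card := by
  rw [eq_comm]
  apply Finset.card_bij (fun i hi => addCell μ i hi)
  · intro i hi
    simp only [up, Finset.mem_filter, mem_Y]
    exact ⟨addCell_card hi, le_addCell hi⟩
  · intro a ha b hb hab
    by_contra hne
    have : (a, μ.rowLen a) ∈ addCell μ b hb := by
      rw [← hab, mem_addCell]; left; rfl
    rw [mem_addCell] at this
    rcases this with h | h
    · rw [Prod.mk.injEq] at h; exact hne h.1
    · exact addable_notMem h
  · -- surjectivity
    intro lam hlam
    simp only [up, Finset.mem_filter, mem_Y] at hlam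
    obtain ⟨hcard, hle⟩ := hlam
    -- the extra cell
    have hsd : (lam.cells \ μ.cells).card = 1 := by
      have e1 : #lam.cells = lam.card := rfl
      have e2 : #μ.cells = μ.card := rfl
      rw [Finset.card_sdiff_of_subset (YoungDiagram.cells_subset_iff.mpr hle)]
      omega
    obtain ⟨c, hc⟩ := Finset.card_eq_one.mp hsd
    have hcmem : c ∈ lam ∧ c ∉ μ := by
      have : c ∈ lam.cells \ μ.cells := hc ▸ Finset.mem_singleton_self c
      simpa using this
    have huniq : ∀ d, d ∈ lam → d ∉ μ → d = c := by
      intro d hd hd'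
      have : d ∈ lam.cells \ μ.cells := Finset.mem_sdiff.mpr ⟨hd, hd'⟩
      rw [hc] at this
      simpa using this
    obtain ⟨i, j⟩ := c
    -- j = rowLen μ i
    have hj : j = μ.rowLen i := by
      have hge : μ.rowLen i ≤ j := by
        by_contra h
        exact hcmem.2 (YoungDiagram.mem_iff_lt_rowLen.mpr (by omega))
      rcases Nat.eq_or_lt_of_le hge with h | h
      · omega
      · exfalso
        have h1 : (i, μ.rowLen i) ∈ lam := lam.up_left_mem le_rfl (by omega) hcmem.1
        have h2 := huniq _ h1 addable_notMem
        rw [Prod.mk.injEq] at h2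
        omega
    subst hj
    have hadd : i ∈ addables μ := by
      simp only [addables, Finset.mem_filter, Finset.mem_range]
      rcases Nat.eq_zero_or_pos i with rfl | hpos
      · constructor
        · omega
        · exact Or.inl rfl
      · have h1 : (i - 1, μ.rowLen i) ∈ lam :=
          lam.up_left_mem (by omega) le_rfl hcmem.1
        have h2 : (i - 1, μ.rowLen i) ∈ μ := by
          by_contra h
          have := huniq _ h1 h
          rw [Prod.mk.injEq] at this; omega
        have h2' := YoungDiagram.mem_iff_lt_rowLen.mp h2
        constructor
        · have h3 : (i - 1, 0) ∈ μ := μ.up_left_mem le_rfl (Nat.zero_le _) h2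
          rw [YoungDiagram.mem_iff_lt_colLen] at h3
          omega
        · exact Or.inr h2' 
    refine ⟨i, hadd, ?_⟩
    -- lam = addCell μ i
    apply YoungDiagram.ext
    apply Finset.eq_of_subset_of_card_le
    · intro d hd
      simp only [YoungDiagram.mem_cells] at hd
      rw [mem_addCell hadd] at hd
      rcases hd with rfl | hd
      · exact hcmem.1
      · exact mem_of_le hle hd
    · have h1 := addCell_card hadd
      have h2 : #lam.cells = lam.card := rfl
      have h3 : #(addCell μ i hadd).cells = (addCell μ i hadd).card := rfl
      omega

lemma card_down : (down μ).card = (removables μ).card := by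
  rw [eq_comm]
  apply Finset.card_bij (fun i hi => delCell μ i hi)
  · intro i hi
    simp only [down, Finset.mem_filter, mem_Y]
    refine ⟨delCell_card hi, delCell_le hi, ?_⟩
    intro h
    have : (i, μ.rowLen i - 1) ∈ delCell μ i hi := by
      rw [h]; exact corner_mem hi
    rw [mem_delCell] at this
    exact this.1 rfl
  · intro a ha b hb hab
    by_contra hne
    have hamem : (a, μ.rowLen a - 1) ∉ delCell μ a ha := by
      rw [mem_delCell]; tauto
    rw [hab, mem_delCell] at hamem
    push_neg at hamem
    have := corner_mem ha
    have h2 := hamem (by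
      intro h
      rw [Prod.mk.injEq] at h
      exact hne h.1)
    exact h2 this
  · intro ν hν
    simp only [down, Finset.mem_filter, mem_Y] at hν
    obtain ⟨hcard, hle, hne⟩ := hν
    have hposc : 0 < μ.card := by
      rcases Nat.eq_zero_or_pos μ.card with h | h
      · exfalso
        apply hne
        have h0 : μ.cells = ∅ := Finset.card_eq_zero.mp h
        have : ν.cells ⊆ μ.cells := YoungDiagram.cells_subset_iff.mpr hle
        rw [h0, Finset.subset_empty] at this
        apply YoungDiagram.ext; rw [h0, this]
      · exact h
    have hsd : (μ.cells \ ν.cells).card = 1 := by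
      rw [Finset.card_sdiff_of_subset (YoungDiagram.cells_subset_iff.mpr hle)]
      have hlt : ν.card < μ.card := by
        rcases Nat.lt_or_ge ν.card μ.card with h | h
        · exact h
        · exfalso
          apply hne
          apply YoungDiagram.ext
          exact Finset.eq_of_subset_of_card_le (YoungDiagram.cells_subset_iff.mpr hle) h
      have e1 : #ν.cells = ν.card := rfl
      have e2 : #μ.cells = μ.card := rfl
      omega
    obtain ⟨c, hc⟩ := Finset.card_eq_one.mp hsd
    have hcmem : c ∈ μ ∧ c ∉ ν := by
      have : c ∈ μ.cells \ ν.cells := hc ▸ Finset.mem_singleton_self c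
      simpa using this
    have huniq : ∀ d, d ∈ μ → d ∉ ν → d = c := by
      intro d hd hd'
      have : d ∈ μ.cells \ ν.cells := Finset.mem_sdiff.mpr ⟨hd, hd'⟩
      rw [hc] at this
      simpa using this
    obtain ⟨i, j⟩ := c
    have hjlt : j < μ.rowLen i := YoungDiagram.mem_iff_lt_rowLen.mp hcmem.1
    have hj : j = μ.rowLen i - 1 := by
      by_contra h
      have h1 : (i, j + 1) ∈ μ := YoungDiagram.mem_iff_lt_rowLen.mpr (by omega)
      have h2 : (i, j + 1) ∈ ν := by
        by_contra h'
        have := huniq _ h1 h'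
        rw [Prod.mk.injEq] at this
        omega
      have : (i, j) ∈ ν := ν.up_left_mem le_rfl (by omega) h2
      exact hcmem.2 this
    subst hj
    have hrem : i ∈ removables μ := by
      simp only [removables, Finset.mem_filter, Finset.mem_range]
      constructor
      · have : (i, 0) ∈ μ := μ.up_left_mem le_rfl (by omega) hcmem.1
        rw [YoungDiagram.mem_iff_lt_colLen] at this
        exact this
      · by_contra h
        have hge : μ.rowLen i ≤ μ.rowLen (i + 1) := by omega
        have h1 : (i + 1, μ.rowLen i - 1) ∈ μ :=
          YoungDiagram.mem_iff_lt_rowLen.mpr (by omega)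
        have h2 : (i + 1, μ.rowLen i - 1) ∈ ν := by
          by_contra h'
          have := huniq _ h1 h'
          rw [Prod.mk.injEq] at this
          omega
        have : (i, μ.rowLen i - 1) ∈ ν := ν.up_left_mem (by omega) le_rfl h2
        exact hcmem.2 this
    refine ⟨i, hrem, ?_⟩
    apply YoungDiagram.ext
    apply Finset.eq_of_subset_of_card_le
    · intro d hd
      simp only [YoungDiagram.mem_cells] at hd ⊢
      rw [mem_delCell hrem] at hd
      obtain ⟨hdne, hdμ⟩ := hd
      by_contra h'
      exact hdne (huniq _ hdμ h')
    · have h1 := delCell_card hrem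
      have h2 : #ν.cells = ν.card := rfl
      have h3 : #(delCell μ i hrem).cells = (delCell μ i hrem).card := rfl
      omega

lemma card_up_eq_card_down_succ : (up μ).card = (down μ).card + 1 := by
  rw [card_up, card_down, card_addables]

/-! ### Lattice counting lemmas -/

lemma card_le_of_le {ν ρ : YoungDiagram} (h : ν ≤ ρ) : ν.card ≤ ρ.card :=
  Finset.card_le_card (YoungDiagram.cells_subset_iff.mpr h)

lemma eq_of_le_of_card_le {ν ρ : YoungDiagram} (h : ν ≤ ρ) (hc : ρ.card ≤ ν.card) : ν = ρ :=
  YoungDiagram.ext (Finset.eq_of_subset_of_card_le (YoungDiagram.cells_subset_iff.mpr h) hc)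

lemma bot_of_card_zero {ν : YoungDiagram} (h : ν.card = 0) : ν = ⊥ := by
  apply YoungDiagram.ext
  rw [Finset.card_eq_zero.mp h]
  rfl

variable {n : ℕ} {ν : YoungDiagram}

lemma sup_card_gt (hμ : μ.card = n) (hν : ν.card = n) (hne : ν ≠ μ) :
    n + 1 ≤ (μ ⊔ ν).card := by
  have hle : μ ≤ μ ⊔ ν := le_sup_left
  have hne' : μ ≠ μ ⊔ ν := by
    intro h
    have : ν ≤ μ := h ▸ le_sup_right
    exact hne (eq_of_le_of_card_le this (by omega))
  have := card_le_of_le hle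
  rcases Nat.eq_or_lt_of_le this with h | h
  · exact absurd (eq_of_le_of_card_le hle (by omega)) hne'
  · omega

lemma inf_card_lt (hμ : μ.card = n) (hν : ν.card = n) (hne : ν ≠ μ) :
    (μ ⊓ ν).card < n := by
  have hle : μ ⊓ ν ≤ μ := inf_le_left
  have hne' : μ ⊓ ν ≠ μ := by
    intro h
    have : μ ≤ ν := by rw [← h]; exact inf_le_right
    exact hne (eq_of_le_of_card_le this (by omega)).symm
  have := card_le_of_le hle
  rcases Nat.eq_or_lt_of_le this with h | h
  · exact absurd (eq_of_le_of_card_le hle (by omega)) hne'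
  · omega

lemma sup_add_inf_card : (μ ⊔ ν).card + (μ ⊓ ν).card = μ.card + ν.card := by
  have := Finset.card_union_add_card_inter μ.cells ν.cells
  simpa [YoungDiagram.card] using this

lemma filter_sup_eq (hμ : μ.card = n) (hν : ν.card = n) (hne : ν ≠ μ) :
    (Y (n + 1)).filter (fun l => μ ≤ l ∧ ν ≤ l) =
      if (μ ⊔ ν).card = n + 1 then {μ ⊔ ν} else ∅ := by
  ext l
  by_cases hc : (μ ⊔ ν).card = n + 1
  · simp only [hc, if_true, Finset.mem_singleton, Finset.mem_filter, mem_Y]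
    constructor
    · rintro ⟨h1, h2, h3⟩
      have hsl : μ ⊔ ν ≤ l := sup_le h2 h3
      exact (eq_of_le_of_card_le hsl (by omega)).symm
    · rintro rfl
      exact ⟨hc, le_sup_left, le_sup_right⟩
  · simp only [hc, if_false, Finset.notMem_empty, iff_false, Finset.mem_filter, mem_Y]
    rintro ⟨h1, h2, h3⟩
    have hsl : μ ⊔ ν ≤ l := sup_le h2 h3
    have h4 := card_le_of_le hsl
    have h5 := sup_card_gt hμ hν hne
    omega

lemma filter_inf_eq (hμ : μ.card = n) (hν : ν.card = n) (hne : ν ≠ μ) (hn : 0 < n) :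
    (down μ).filter (fun ρ => ρ ≤ ν) =
      if (μ ⊓ ν).card = n - 1 then {μ ⊓ ν} else ∅ := by
  ext ρ
  rw [Finset.mem_filter]
  simp only [down, Finset.mem_filter, mem_Y, hμ]
  by_cases hc : (μ ⊓ ν).card = n - 1
  · simp only [hc, if_true, Finset.mem_singleton]
    constructor
    · rintro ⟨⟨h1, h2, h3⟩, h4⟩
      have hρ : ρ ≤ μ ⊓ ν := le_inf h2 h4
      exact eq_of_le_of_card_le hρ (by omega)
    · rintro rfl
      refine ⟨⟨hc, inf_le_left, ?_⟩, inf_le_right⟩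
      intro h
      rw [h] at hc
      omega
  · simp only [hc, if_false, Finset.notMem_empty, iff_false]
    rintro ⟨⟨h1, h2, h3⟩, h4⟩
    have hρ : ρ ≤ μ ⊓ ν := le_inf h2 h4
    have h5 := card_le_of_le hρ
    have h6 := inf_card_lt hμ hν hne
    omega

lemma down_bot : down (⊥ : YoungDiagram) = ∅ := by
  ext ρ
  simp only [down, Finset.mem_filter, mem_Y, Finset.notMem_empty, iff_false]
  rintro ⟨h1, h2, h3⟩
  exact h3 (le_bot_iff.mp h2)

lemma sum_filter_swap (A B : Finset YoungDiagram) (p : YoungDiagram → YoungDiagram → Prop)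
    (f : YoungDiagram → ℕ) :
    ∑ a ∈ A, ∑ b ∈ B.filter (fun b => p a b), f b
      = ∑ b ∈ B, ((A.filter (fun a => p a b)).card) * f b := by
  simp_rw [Finset.sum_filter]
  rw [Finset.sum_comm]
  refine Finset.sum_congr rfl fun b _ => ?_
  rw [← Finset.sum_filter, Finset.sum_const, smul_eq_mul]

/-- The key commutation count: for `ν, μ` both of size `n`. -/
lemma count_key (hμ : μ.card = n) (hν : ν.card = n) :
    ((Y (n + 1)).filter (fun l => μ ≤ l ∧ ν ≤ l)).card
      = ((down μ).filter (fun ρ => ρ ≤ ν)).card + if ν = μ then 1 else 0 := by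
  by_cases hne : ν = μ
  · subst hne
    rw [if_pos rfl]
    have h1 : (Y (ν.card + 1)).filter (fun l => ν ≤ l ∧ ν ≤ l) = up ν := by
      unfold up
      apply Finset.filter_congr
      intro l _
      simp [and_self]
    have h2 : (down ν).filter (fun ρ => ρ ≤ ν) = down ν := by
      apply Finset.filter_true_of_mem
      intro ρ hρ
      simp only [down, Finset.mem_filter] at hρ
      exact hρ.2.1
    rw [← hμ] at *
    rw [h1, h2]
    exact card_up_eq_card_down_succ
  · rw [if_neg hne, Nat.add_zero]
    have hn : 0 < n := by
      rcases Nat.eq_zero_or_pos n with rfl | h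
      · exact absurd ((bot_of_card_zero hν).trans (bot_of_card_zero hμ).symm) hne
      · exact h
    rw [filter_sup_eq hμ hν hne, filter_inf_eq hμ hν hne hn]
    have hsum := sup_add_inf_card (μ := μ) (ν := ν)
    have h1 := sup_card_gt hμ hν hne
    have h2 := inf_card_lt hμ hν hne
    split_ifs with hs hi hi
    · simp
    · exfalso; apply hi; omega
    · exfalso; apply hs; omega
    · simp

/-- The up-down lemma: `Σ_{λ ⋗ μ} C λ = (n+1) C μ`. -/
lemma up_down : ∀ n : ℕ, ∀ μ : YoungDiagram, μ.card = n →
    ∑ l ∈ (Y (n + 1)).filter (fun l => μ ≤ l), C (n + 1) l = (n + 1) * C n μ := by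
  intro n
  induction n with
  | zero =>
    intro μ hμ
    have hbot : μ = ⊥ := bot_of_card_zero hμ
    subst hbot
    -- rewrite each C 1 l as sum over down
    rw [Finset.sum_congr rfl (fun l hl => C_succ'
      (by simp only [Finset.mem_filter, mem_Y] at hl; exact hl.1))]
    have : ∀ l ∈ (Y 1).filter (fun l => (⊥ : YoungDiagram) ≤ l),
        ∑ ν ∈ down l, C 0 ν = 1 := by
      intro l hl
      simp only [Finset.mem_filter, mem_Y] at hl
      have : down l = {⊥} := by
        rw [down_eq (n := 0) hl.1, Y_zero]
        apply Finset.filter_true_of_mem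
        intro ρ hρ
        simp only [Finset.mem_singleton] at hρ
        subst hρ
        exact bot_le
      rw [this]
      simp [C]
    rw [Finset.sum_congr rfl this, Finset.sum_const, smul_eq_mul, mul_one]
    have h1 : (Y 1).filter (fun l => (⊥ : YoungDiagram) ≤ l) = up ⊥ := by
      unfold up
      congr 1
    rw [h1, card_up_eq_card_down_succ, down_bot]
    simp [C]
  | succ m ih =>
    intro μ hμ
    set n := m + 1 with hn
    -- expand C (n+1) l
    rw [Finset.sum_congr rfl (fun l hl => C_succ
      (by simp only [Finset.mem_filter, mem_Y] at hl; exact hl.1))]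
    -- swap
    have hswap := sum_filter_swap ((Y (n + 1)).filter (fun l => μ ≤ l)) (Y n)
      (fun l ν => ν ≤ l) (C n)
    rw [hswap]
    -- pointwise counts
    have hpt : ∀ ν ∈ Y n,
        ((((Y (n + 1)).filter (fun l => μ ≤ l)).filter (fun l => ν ≤ l)).card) * C n ν
          = (((down μ).filter (fun ρ => ρ ≤ ν)).card) * C n ν
            + (if ν = μ then 1 else 0) * C n ν := by
      intro ν hν
      rw [Finset.filter_filter, count_key hμ (mem_Y.mp hν), add_mul]
    rw [Finset.sum_congr rfl hpt, Finset.sum_add_distrib]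
    -- second summand
    have hsnd : ∑ ν ∈ Y n, (if ν = μ then 1 else 0) * C n ν = C n μ := by
      rw [Finset.sum_congr rfl (fun ν _ => by
        rw [ite_mul, one_mul, zero_mul])]
      rw [Finset.sum_ite_eq' (Y n) μ (C n)]
      rw [if_pos (mem_Y.mpr hμ)]
    rw [hsnd]
    -- first summand: swap back and use IH
    have hfst : ∑ ν ∈ Y n, (((down μ).filter (fun ρ => ρ ≤ ν)).card) * C n ν
        = n * C n μ := by
      rw [← sum_filter_swap (down μ) (Y n) (fun ρ ν => ρ ≤ ν) (C n)]
      have : ∀ ρ ∈ down μ, ∑ ν ∈ (Y n).filter (fun ν => ρ ≤ ν), C n ν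
          = n * C m ρ := by
        intro ρ hρ
        simp only [down, Finset.mem_filter, mem_Y, hμ] at hρ
        exact ih ρ (by omega)
      rw [Finset.sum_congr rfl this, ← Finset.mul_sum]
      congr 1
      exact (C_succ' hμ).symm
    rw [hfst]
    ring

/-! ### SYT counting -/


instance : Finite (SYT μ) := by
  unfold SYT
  infer_instance

lemma down_card (h : μ.card = n + 1) (hν : ν ∈ down μ) : ν.card = n := by
  simp only [down, Finset.mem_filter, mem_Y] at hν
  omega

lemma down_le (hν : ν ∈ down μ) : ν ≤ μ := by
  simp only [down, Finset.mem_filter] at hν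
  exact hν.2.1

lemma down_sdiff_card (h : μ.card = n + 1) (hν : ν ∈ down μ) :
    (μ.cells \ ν.cells).card = 1 := by
  have h1 : ν.card = n := down_card h hν
  have h2 := down_le hν
  rw [Finset.card_sdiff_of_subset (YoungDiagram.cells_subset_iff.mpr h2)]
  have e1 : #μ.cells = μ.card := rfl
  have e2 : #ν.cells = ν.card := rfl
  omega

/-- at most one cell of μ outside ν -/
lemma down_unique (h : μ.card = n + 1) (hν : ν ∈ down μ) :
    ∀ d₁ ∈ μ.cells, ∀ d₂ ∈ μ.cells, d₁ ∉ ν.cells → d₂ ∉ ν.cells → d₁ = d₂ := by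
  intro d₁ h₁ d₂ h₂ h₁' h₂'
  have := down_sdiff_card h hν
  exact Finset.card_le_one.mp (le_of_eq this) d₁ (Finset.mem_sdiff.mpr ⟨h₁, h₁'⟩)
    d₂ (Finset.mem_sdiff.mpr ⟨h₂, h₂'⟩)

/-- the cell outside ν is maximal in μ -/
lemma down_max (h : μ.card = n + 1) (hν : ν ∈ down μ) :
    ∀ d ∈ μ.cells, d ∉ ν.cells → ∀ d' ∈ μ.cells, d.1 ≤ d'.1 → d.2 ≤ d'.2 → d' = d := by
  intro d hd hd' e he h1 h2
  by_contra hne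
  have heν : e ∈ ν.cells := by
    by_contra h'
    exact hne (down_unique h hν e he d hd h' hd')
  have : d ∈ ν.cells := ν.isLowerSet (Prod.le_def.mpr ⟨h1, h2⟩) heν
  exact hd' this

/-- The gluing map from pairs (smaller diagram, tableau) to tableaux of μ. -/
noncomputable def G (μ : YoungDiagram) (n : ℕ) (h : μ.card = n + 1)
    (x : Σ a : ↥(down μ), SYT a.1) : SYT μ :=
  ⟨fun d => if hd : d.1 ∈ x.1.1.cells
      then ⟨(x.2.1 ⟨d.1, hd⟩).1, by
        have h1 : (x.2.1 ⟨d.1, hd⟩).1 < x.1.1.card := (x.2.1 ⟨d.1, hd⟩).2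
        have h2 : x.1.1.card = n := down_card h x.1.2
        omega⟩
      else ⟨n, by omega⟩,
    by
      -- bijective
      rw [Fintype.bijective_iff_injective_and_card]
      constructor
      · intro d₁ d₂ heq
        by_cases h₁ : d₁.1 ∈ x.1.1.cells
        · by_cases h₂ : d₂.1 ∈ x.1.1.cells
          · simp only [dif_pos h₁, dif_pos h₂, Fin.mk.injEq] at heq
            have h3 : x.2.1 ⟨d₁.1, h₁⟩ = x.2.1 ⟨d₂.1, h₂⟩ := Fin.val_injective heq
            have h4 := x.2.2.1.1 h3
            exact Subtype.ext (by simpa using h4)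
          · exfalso
            simp only [dif_pos h₁, dif_neg h₂, Fin.mk.injEq] at heq
            have hl : (x.2.1 ⟨d₁.1, h₁⟩).1 < x.1.1.card := (x.2.1 ⟨d₁.1, h₁⟩).2
            have hc : x.1.1.card = n := down_card h x.1.2
            omega
        · by_cases h₂ : d₂.1 ∈ x.1.1.cells
          · exfalso
            simp only [dif_neg h₁, dif_pos h₂, Fin.mk.injEq] at heq
            have hl : (x.2.1 ⟨d₂.1, h₂⟩).1 < x.1.1.card := (x.2.1 ⟨d₂.1, h₂⟩).2
            have hc : x.1.1.card = n := down_card h x.1.2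
            omega
          · exact Subtype.ext (down_unique h x.1.2 d₁.1 d₁.2 d₂.1 d₂.2 h₁ h₂)
      · rw [Fintype.card_coe, Fintype.card_fin],
    by
      -- monotone
      intro c₁ c₂ h1 h2 hne
      have hvne : c₁.1 ≠ c₂.1 := fun hh => hne (Subtype.ext hh)
      by_cases hc₁ : c₁.1 ∈ x.1.1.cells
      · by_cases hc₂ : c₂.1 ∈ x.1.1.cells
        · simp only [dif_pos hc₁, dif_pos hc₂, Fin.mk_lt_mk]
          exact x.2.2.2 ⟨c₁.1, hc₁⟩ ⟨c₂.1, hc₂⟩ h1 h2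
            (fun hh => hvne (by simpa using hh))
        · simp only [dif_pos hc₁, dif_neg hc₂, Fin.mk_lt_mk]
          have hlt : (x.2.1 ⟨c₁.1, hc₁⟩).1 < x.1.1.card := (x.2.1 ⟨c₁.1, hc₁⟩).2
          have hc : x.1.1.card = n := down_card h x.1.2
          omega
      · exfalso
        by_cases hc₂ : c₂.1 ∈ x.1.1.cells
        · have := down_max h x.1.2 c₁.1 c₁.2 hc₁ c₂.1 c₂.2 h1 h2
          exact hvne this.symm
        · exact hvne (down_unique h x.1.2 c₁.1 c₁.2 c₂.1 c₂.2 hc₁ hc₂)⟩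

lemma G_val (h : μ.card = n + 1) (x : Σ a : ↥(down μ), SYT a.1) (d : ↥μ.cells) :
    ((G μ n h x).1 d).1
      = if hd : d.1 ∈ x.1.1.cells then (x.2.1 ⟨d.1, hd⟩).1 else n := by
  simp only [G]
  by_cases hd : d.1 ∈ x.1.1.cells
  · rw [dif_pos hd, dif_pos hd]
  · rw [dif_neg hd, dif_neg hd]

lemma down_mem_iff_val_lt (h : μ.card = n + 1) (x : Σ a : ↥(down μ), SYT a.1)
    (d : ↥μ.cells) : d.1 ∈ x.1.1.cells ↔ ((G μ n h x).1 d).1 < n := by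
  rw [G_val]
  by_cases hd : d.1 ∈ x.1.1.cells
  · rw [dif_pos hd]
    simp only [hd, true_iff]
    have h1 := (x.2.1 ⟨d.1, hd⟩).2
    have h2 : x.1.1.card = n := down_card h x.1.2
    omega
  · rw [dif_neg hd]
    simp only [hd, false_iff]
    omega

lemma G_injective (h : μ.card = n + 1) : Function.Injective (G μ n h) := by
  intro x y hxy
  obtain ⟨a, g⟩ := x
  obtain ⟨b, g'⟩ := y
  have hab : a = b := by
    apply Subtype.ext
    apply YoungDiagram.ext
    ext c
    constructor
    · intro hc
      have hcμ : c ∈ μ.cells := mem_of_le (down_le a.2) hc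
      have h1 := (down_mem_iff_val_lt h ⟨a, g⟩ ⟨c, hcμ⟩).mp hc
      rw [hxy] at h1
      exact (down_mem_iff_val_lt h ⟨b, g'⟩ ⟨c, hcμ⟩).mpr h1
    · intro hc
      have hcμ : c ∈ μ.cells := mem_of_le (down_le b.2) hc
      have h1 := (down_mem_iff_val_lt h ⟨b, g'⟩ ⟨c, hcμ⟩).mp hc
      rw [← hxy] at h1
      exact (down_mem_iff_val_lt h ⟨a, g⟩ ⟨c, hcμ⟩).mpr h1
  subst hab
  have hgg : g = g' := by
    apply Subtype.ext
    funext d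
    apply Fin.ext
    have hdμ : d.1 ∈ μ.cells := mem_of_le (down_le a.2) d.2
    have e1 : ((G μ n h ⟨a, g⟩).1 ⟨d.1, hdμ⟩).1 = (g.1 d).1 := by
      rw [G_val h ⟨a, g⟩ ⟨d.1, hdμ⟩, dif_pos d.2]
    have e2 : ((G μ n h ⟨a, g'⟩).1 ⟨d.1, hdμ⟩).1 = (g'.1 d).1 := by
      rw [G_val h ⟨a, g'⟩ ⟨d.1, hdμ⟩, dif_pos d.2]
    rw [← e1, ← e2, hxy]
  rw [hgg]

lemma G_surjective (h : μ.card = n + 1) : Function.Surjective (G μ n h) := by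
  rintro ⟨f, hbij, hmono⟩
  obtain ⟨cs, hcs⟩ : ∃ cs : ↥μ.cells, f cs = ⟨n, by omega⟩ := hbij.2 ⟨n, by omega⟩
  have hlt : ∀ d : ↥μ.cells, d ≠ cs → (f d).1 < n := by
    intro d hd
    have h1 : (f d).1 < n + 1 := h ▸ (f d).2
    have h2 : (f d).1 ≠ n := by
      intro hv
      apply hd
      apply hbij.1
      rw [hcs]
      exact Fin.ext hv
    omega
  have hmax' : ∀ d : ↥μ.cells, cs.1.1 ≤ d.1.1 → cs.1.2 ≤ d.1.2 → d = cs := by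
    intro d h1 h2
    by_contra hne
    have h3 := hmono cs d h1 h2 (Ne.symm hne)
    rw [hcs] at h3
    rw [Fin.lt_def] at h3
    have := hlt d hne
    simp only at h3
    omega
  have hlower : IsLowerSet (↑(μ.cells.erase cs.1) : Set (ℕ × ℕ)) := by
    intro p q hqp hp
    rw [Finset.mem_coe, Finset.mem_erase] at hp ⊢
    obtain ⟨hpne, hpμ⟩ := hp
    refine ⟨?_, μ.isLowerSet hqp hpμ⟩
    rintro rfl
    have := hmax' ⟨p, hpμ⟩ (Prod.le_def.mp hqp).1 (Prod.le_def.mp hqp).2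
    exact hpne (congrArg Subtype.val this)
  set ν : YoungDiagram := ⟨μ.cells.erase cs.1, hlower⟩ with hν
  have hνcells : ν.cells = μ.cells.erase cs.1 := rfl
  have hνcard : ν.card = n := by
    show #ν.cells = n
    rw [hνcells, Finset.card_erase_of_mem cs.2]
    have e1 : #μ.cells = μ.card := rfl
    omega
  have hνdown : ν ∈ down μ := by
    simp only [down, Finset.mem_filter, mem_Y]
    refine ⟨by omega, ?_, ?_⟩
    · rw [← YoungDiagram.cells_subset_iff, hνcells]
      exact Finset.erase_subset _ _
    · intro hh
      have h2 : cs.1 ∈ ν.cells := by rw [hh]; exact cs.2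
      rw [hνcells] at h2
      exact Finset.notMem_erase _ _ h2
  have hmem' : ∀ d : ↥ν.cells, d.1 ∈ μ.cells.erase cs.1 := fun d => d.2
  have hmem : ∀ d : ↥ν.cells, d.1 ∈ μ.cells := fun d =>
    Finset.mem_of_mem_erase (hmem' d)
  have hnecs : ∀ d : ↥ν.cells, (⟨d.1, hmem d⟩ : ↥μ.cells) ≠ cs := by
    intro d hh
    have h2 := (Finset.mem_erase.mp (hmem' d)).1
    exact h2 (congrArg Subtype.val hh)
  have hgval : ∀ d : ↥ν.cells, (f ⟨d.1, hmem d⟩).1 < ν.card := by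
    intro d
    have := hlt _ (hnecs d)
    omega
  refine ⟨⟨⟨ν, hνdown⟩, ⟨fun d => ⟨(f ⟨d.1, hmem d⟩).1, hgval d⟩, ?_, ?_⟩⟩, ?_⟩
  · -- bijective
    rw [Fintype.bijective_iff_injective_and_card]
    constructor
    · intro d₁ d₂ heq
      simp only [Fin.mk.injEq] at heq
      have h3 := hbij.1 (Fin.val_injective heq)
      exact Subtype.ext (by simpa using h3)
    · rw [Fintype.card_coe, Fintype.card_fin]
  · -- monotone
    intro c₁ c₂ h1 h2 hne
    rw [Fin.mk_lt_mk]
    have h3 := hmono ⟨c₁.1, hmem c₁⟩ ⟨c₂.1, hmem c₂⟩ h1 h2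
      (fun hh => hne (Subtype.ext (by simpa using hh)))
    exact h3
  · -- G applied equals f
    apply Subtype.ext
    funext d
    apply Fin.ext
    rw [G_val]
    by_cases hd : d.1 ∈ ν.cells
    · rw [dif_pos hd]
    · rw [dif_neg hd]
      have hdc : d = cs := by
        by_contra hne
        apply hd
        rw [hνcells, Finset.mem_erase]
        exact ⟨fun hh => hne (Subtype.ext hh), d.2⟩
      show n = (f d).1
      have hfd : f d = ⟨n, by omega⟩ := by rw [hdc]; exact hcs
      rw [hfd]

lemma card_branch (h : μ.card = n + 1) :
    Nat.card (SYT μ) = ∑ ν ∈ down μ, Nat.card (SYT ν) := by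
  have hbij : Function.Bijective (G μ n h) := ⟨G_injective h, G_surjective h⟩
  rw [← Nat.card_congr (Equiv.ofBijective _ hbij)]
  haveI : ∀ a : ↥(down μ), Fintype (SYT a.1) := fun a => Fintype.ofFinite _
  rw [Nat.card_eq_fintype_card, Fintype.card_sigma]
  rw [← Finset.sum_coe_sort (down μ) (fun ν => Nat.card (SYT ν))]
  exact Finset.sum_congr rfl fun a _ => (Nat.card_eq_fintype_card).symm

lemma card_SYT_zero (hμ : μ.card = 0) : Nat.card (SYT μ) = 1 := by
  have hcells : μ.cells = ∅ := Finset.card_eq_zero.mp hμ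
  have hfalse : ∀ d : ↥μ.cells, False := fun d =>
    (Finset.eq_empty_iff_forall_notMem.mp hcells) d.1 d.2
  have helt : SYT μ :=
    ⟨fun d => (hfalse d).elim,
      ⟨fun d => (hfalse d).elim,
       fun b => absurd b.2 (by omega)⟩,
      fun c₁ => (hfalse c₁).elim⟩
  haveI : Unique (SYT μ) :=
    { default := helt
      uniq := fun s => Subtype.ext (funext fun d => (hfalse d).elim) }
  exact Nat.card_unique


/-! ### Putting it all together -/

lemma card_SYT_eq_C : ∀ n : ℕ, ∀ μ : YoungDiagram, μ.card = n →
    Nat.card (SYT μ) = C n μ := by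
  intro n
  induction n with
  | zero =>
    intro μ hμ
    have hb := bot_of_card_zero hμ
    subst hb
    rw [card_SYT_zero hμ]
    simp [C]
  | succ m ih =>
    intro μ hμ
    rw [card_branch hμ, C_succ' hμ]
    exact Finset.sum_congr rfl fun ν hν => ih ν (down_card hμ hν)

lemma sum_filter_swap₂ (A B : Finset YoungDiagram) (p : YoungDiagram → YoungDiagram → Prop)
    (f : YoungDiagram → YoungDiagram → ℕ) :
    ∑ a ∈ A, ∑ b ∈ B.filter (fun b => p a b), f a b
      = ∑ b ∈ B, ∑ a ∈ A.filter (fun a => p a b), f a b := by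
  simp_rw [Finset.sum_filter]
  exact Finset.sum_comm

lemma main_sum : ∀ n : ℕ, ∑ μ ∈ Y n, C n μ * C n μ = n.factorial := by
  intro n
  induction n with
  | zero =>
    rw [Y_zero]
    simp [C]
  | succ m ih =>
    have h1 : ∀ l ∈ Y (m + 1), C (m + 1) l * C (m + 1) l
        = ∑ ν ∈ (Y m).filter (fun ν => ν ≤ l), C (m + 1) l * C m ν := by
      intro l hl
      rw [← Finset.mul_sum, ← C_succ (mem_Y.mp hl)]
    rw [Finset.sum_congr rfl h1,
      sum_filter_swap₂ (Y (m + 1)) (Y m) (fun l ν => ν ≤ l) (fun l ν => C (m + 1) l * C m ν)]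
    have h2 : ∀ ν ∈ Y m, ∑ l ∈ (Y (m + 1)).filter (fun l => ν ≤ l), C (m + 1) l * C m ν
        = ((m + 1) * C m ν) * C m ν := by
      intro ν hν
      rw [← Finset.sum_mul, up_down m ν (mem_Y.mp hν)]
    rw [Finset.sum_congr rfl h2, Nat.factorial_succ, ← ih, Finset.mul_sum]
    exact Finset.sum_congr rfl fun ν _ => by ring

end SYTAux

open SYTAux in
/-- Σ_{λ ⊢ n} d_λ² = n!. -/
theorem stmt5 (n : ℕ) :
    Nat.card ((μ : {μ : YoungDiagram // μ.card = n}) × (SYT μ.1 × SYT μ.1))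
      = n.factorial := by
  classical
  haveI hfin : Finite {μ : YoungDiagram // μ.card = n} := (finite_Y n).to_subtype
  haveI : Fintype {μ : YoungDiagram // μ.card = n} := Fintype.ofFinite _
  haveI : ∀ μ : YoungDiagram, Fintype (SYT μ) := fun μ => Fintype.ofFinite _
  rw [Nat.card_eq_fintype_card, Fintype.card_sigma]
  have h1 : ∀ μ : {μ : YoungDiagram // μ.card = n},
      Fintype.card (SYT μ.1 × SYT μ.1) = C n μ.1 * C n μ.1 := by
    intro μ
    rw [← Nat.card_eq_fintype_card, Nat.card_prod, card_SYT_eq_C n μ.1 μ.2]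
  rw [Finset.sum_congr rfl (fun μ _ => h1 μ), ← main_sum n]
  exact (Finset.sum_subtype (Y n) (fun x => mem_Y) (fun μ => C n μ * C n μ)).symm
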